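/- Let f : (a,b) → ℝ be uniformly convex with modulus Φ ≥ 0, i.e., f(x) - f(y) - f'(y)(x-y) - Φ(|x-y|) ≥ 0 for all x,y, and differentiable. Let x₁,...,xₙ ∈ (a,b), a₁,...,aₙ ≥ 0 with Aₙ = ∑aᵢ > 0, x̄ = (1/Aₙ)∑aᵢxᵢ. Then 0 ≤ |(1/Aₙ)∑ aᵢ |f(xᵢ) - f(x̄) - Φ(|x̄ - xᵢ|)| - (1/Aₙ)∑ aᵢ |f'(x̄)||x̄ - xᵢ|| ≤ (1/Aₙ)∑ aᵢ f(xᵢ) - f(x̄) - (1/Aₙ)∑ aᵢ Φ(|x̄ - xᵢ|). -/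
import Mathlib


/-- bounds on the Jensen gap for uniformly convex functions. -/
theorem stmt6 (a b : ℝ) (hab : a < b) (f f' Φ : ℝ → ℝ)
    (hf : ∀ x ∈ Set.Ioo a b, HasDerivAt f (f' x) x)
    (hΦnn : ∀ t ∈ Set.Icc 0 (b - a), 0 ≤ Φ t)
    (huc : ∀ x ∈ Set.Ioo a b, ∀ y ∈ Set.Ioo a b,
      f y + f' y * (x - y) + Φ |x - y| ≤ f x)
    (n : ℕ) (hn : 0 < n) (w x : ℕ → ℝ) (A xbar : ℝ)
    (hA : A = ∑ i ∈ Finset.range n, w i) (hApos : 0 < A)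
    (hw : ∀ i < n, 0 ≤ w i)
    (hx : ∀ i < n, x i ∈ Set.Ioo a b)
    (hxbar : xbar = (1 / A) * ∑ i ∈ Finset.range n, w i * x i) :
    0 ≤ |(1 / A) * (∑ i ∈ Finset.range n, w i * abs (f (x i) - f xbar - Φ |xbar - x i|)) -
          (1 / A) * ∑ i ∈ Finset.range n, w i * (|f' xbar| * |xbar - x i|)| ∧
      |(1 / A) * (∑ i ∈ Finset.range n, w i * abs (f (x i) - f xbar - Φ |xbar - x i|)) -
          (1 / A) * ∑ i ∈ Finset.range n, w i * (|f' xbar| * |xbar - x i|)| ≤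
        (1 / A) * ∑ i ∈ Finset.range n, w i * f (x i) - f xbar -
          (1 / A) * ∑ i ∈ Finset.range n, w i * Φ |xbar - x i| := by
  refine ⟨abs_nonneg _, ?_⟩
  have hmem : ∀ i ∈ Finset.range n, x i ∈ Set.Ioo a b := fun i hi =>
    hx i (Finset.mem_range.mp hi)
  have hwmem : ∀ i ∈ Finset.range n, 0 ≤ w i := fun i hi =>
    hw i (Finset.mem_range.mp hi)
  obtain ⟨j, hj, hjw⟩ : ∃ j ∈ Finset.range n, 0 < w j := by
    by_contra h
    push_neg at h
    have : A ≤ 0 := by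
      rw [hA]; exact Finset.sum_nonpos fun i hi => h i hi
    linarith
  have hAx : A * xbar = ∑ i ∈ Finset.range n, w i * x i := by
    rw [hxbar]; field_simp
  -- xbar ∈ Ioo a b
  have hxbar_mem : xbar ∈ Set.Ioo a b := by
    constructor
    · have h1 : A * a < ∑ i ∈ Finset.range n, w i * x i := by
        rw [hA, Finset.sum_mul]
        apply Finset.sum_lt_sum
        · intro i hi
          have := (hmem i hi).1.le
          have hwi := hwmem i hi
          nlinarith
        · exact ⟨j, hj, by nlinarith [(hmem j hj).1]⟩
      nlinarith
    · have h1 : ∑ i ∈ Finset.range n, w i * x i < A * b := by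
        rw [hA, Finset.sum_mul]
        apply Finset.sum_lt_sum
        · intro i hi
          have := (hmem i hi).2.le
          have hwi := hwmem i hi
          nlinarith
        · exact ⟨j, hj, by nlinarith [(hmem j hj).2]⟩
      nlinarith
  set g : ℕ → ℝ := fun i => f (x i) - f xbar - Φ |xbar - x i| with hg
  set h : ℕ → ℝ := fun i => f' xbar * (x i - xbar) with hh
  have hgh : ∀ i ∈ Finset.range n, h i ≤ g i := by
    intro i hi
    have := huc (x i) (hmem i hi) xbar hxbar_mem
    have habs : |x i - xbar| = |xbar - x i| := abs_sub_comm _ _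
    simp only [hg, hh]
    rw [← habs]
    linarith
  have hsumh : ∑ i ∈ Finset.range n, w i * h i = 0 := by
    have e : ∀ i ∈ Finset.range n, w i * h i
        = f' xbar * (w i * x i) - f' xbar * xbar * w i := fun i _ => by
      simp only [hh]; ring
    rw [Finset.sum_congr rfl e, Finset.sum_sub_distrib, ← Finset.mul_sum, ← Finset.mul_sum,
      ← hAx, ← hA]
    ring
  have key : |(∑ i ∈ Finset.range n, w i * |g i|) -
      ∑ i ∈ Finset.range n, w i * (|f' xbar| * |xbar - x i|)| ≤
      ∑ i ∈ Finset.range n, w i * g i := by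
    have habsh : ∀ i ∈ Finset.range n, |f' xbar| * |xbar - x i| = |h i| := by
      intro i hi
      simp only [hh]
      rw [abs_mul, abs_sub_comm (x i) xbar]
    calc |(∑ i ∈ Finset.range n, w i * |g i|) -
          ∑ i ∈ Finset.range n, w i * (|f' xbar| * |xbar - x i|)|
        = |∑ i ∈ Finset.range n, w i * (|g i| - |h i|)| := by
          rw [← Finset.sum_sub_distrib]
          congr 1
          apply Finset.sum_congr rfl
          intro i hi
          rw [habsh i hi]; ring
      _ ≤ ∑ i ∈ Finset.range n, |w i * (|g i| - |h i|)| :=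
          Finset.abs_sum_le_sum_abs _ _
      _ ≤ ∑ i ∈ Finset.range n, w i * (g i - h i) := by
          apply Finset.sum_le_sum
          intro i hi
          rw [abs_mul, abs_of_nonneg (hwmem i hi)]
          apply mul_le_mul_of_nonneg_left _ (hwmem i hi)
          have h1 := abs_abs_sub_abs_le_abs_sub (g i) (h i)
          have h2 : |g i - h i| = g i - h i := abs_of_nonneg (by linarith [hgh i hi])
          linarith
      _ = ∑ i ∈ Finset.range n, w i * g i := by
          have : ∑ i ∈ Finset.range n, w i * (g i - h i)
              = (∑ i ∈ Finset.range n, w i * g i) - ∑ i ∈ Finset.range n, w i * h i := by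
            rw [← Finset.sum_sub_distrib]
            exact Finset.sum_congr rfl fun i _ => by ring
          rw [this, hsumh, sub_zero]
  -- conclude
  have hrhs : (1 / A) * ∑ i ∈ Finset.range n, w i * f (x i) - f xbar -
      (1 / A) * ∑ i ∈ Finset.range n, w i * Φ |xbar - x i|
      = (1 / A) * ∑ i ∈ Finset.range n, w i * g i := by
    have hsw : ∑ i ∈ Finset.range n, w i * f xbar = A * f xbar := by
      rw [hA, Finset.sum_mul]
    have : ∑ i ∈ Finset.range n, w i * g i
        = (∑ i ∈ Finset.range n, w i * f (x i)) - A * f xbar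
          - ∑ i ∈ Finset.range n, w i * Φ |xbar - x i| := by
      rw [← hsw]
      rw [show (∑ i ∈ Finset.range n, w i * f (x i)) - (∑ i ∈ Finset.range n, w i * f xbar)
          - ∑ i ∈ Finset.range n, w i * Φ |xbar - x i|
          = ∑ i ∈ Finset.range n, (w i * f (x i) - w i * f xbar - w i * Φ |xbar - x i|) by
        rw [← Finset.sum_sub_distrib, ← Finset.sum_sub_distrib]]
      apply Finset.sum_congr rfl
      intro i hi
      simp only [hg]; ring
    rw [this]
    field_simp
  rw [hrhs, ← mul_sub, abs_mul, abs_of_nonneg (by positivity : (0:ℝ) ≤ 1 / A)]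
  exact mul_le_mul_of_nonneg_left key (by positivity)
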